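/- Let 𝒜 = {A_1,…,A_K} be self-adjoint n×n matrices over 𝔽 (ℝ or ℂ) and let Q be unitary (Q^* = Q^{-1}). Set D_k = Q^*A_kQ. Then the matrix S = Σ_{k=1}^K [D_k^*, D_k ∘ J] is skew-adjoint (S^* = −S), so G = Q·S lies in the tangent space Q·𝕊(n,𝔽) of the unitary group at Q, and G is the gradient of f_𝒜 at Q in the sense that df_𝒜|_Q(Z) = ⟨G, Z⟩_ℝ for all matrices Z. -/

import Mathlib

set_option maxHeartbeats 1000000
set_option maxRecDepth 10000

open Matrix

attribute [local instance] Matrix.frobeniusNormedAddCommGroup Matrix.frobeniusNormedSpace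

variable {𝕜 : Type*} [RCLike 𝕜] {n K : ℕ}

/-- The real Frobenius inner product `⟨X,Y⟩_ℝ = Re ∑ᵢⱼ Xᵢⱼ conj(Yᵢⱼ)`. -/
noncomputable def rinner (X Y : Matrix (Fin n) (Fin n) 𝕜) : ℝ :=
  RCLike.re (∑ i, ∑ j, X i j * (starRingEnd 𝕜) (Y i j))

/-- The off-diagonal part `X ∘ J` (Hadamard product with the matrix `J` having zeros
on the diagonal and ones elsewhere). -/
def offd (X : Matrix (Fin n) (Fin n) 𝕜) : Matrix (Fin n) (Fin n) 𝕜 :=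
  fun i j => if i = j then 0 else X i j

/-- The cost functional `f_𝒜(Q) = (1/2) ∑ₖ ‖J ∘ (Q⁻¹AₖQ)‖²`. -/
noncomputable def costF (A : Fin K → Matrix (Fin n) (Fin n) 𝕜)
    (Q : Matrix (Fin n) (Fin n) 𝕜) : ℝ :=
  (1 / 2) * ∑ k, ∑ i, ∑ j, if i ≠ j then ‖(Q⁻¹ * A k * Q) i j‖ ^ 2 else 0

attribute [local instance] Matrix.frobeniusNormedRing Matrix.frobeniusNormedAlgebra

private lemma offd_conjTranspose (X : Matrix (Fin n) (Fin n) 𝕜) : (offd X)ᴴ = offd Xᴴ := by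
  ext i j
  by_cases h : i = j <;>
    simp [offd, Matrix.conjTranspose_apply, h, eq_comm]

private lemma rinner_eq_trace (X Y : Matrix (Fin n) (Fin n) 𝕜) :
    rinner X Y = RCLike.re (Matrix.trace (X * Yᴴ)) := by
  rw [rinner, Matrix.trace]
  simp only [Matrix.diag, Matrix.mul_apply, Matrix.conjTranspose_apply, starRingEnd_apply]

private lemma sum_ite_re (X Y : Matrix (Fin n) (Fin n) 𝕜) :
    ∑ i, ∑ j, (if i ≠ j then RCLike.re ((starRingEnd 𝕜) (X i j) * Y i j) else 0)
      = RCLike.re (Matrix.trace ((offd X)ᴴ * Y)) := by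
  rw [Matrix.trace]
  simp only [Matrix.diag, Matrix.mul_apply, Matrix.conjTranspose_apply, offd]
  rw [map_sum, Finset.sum_comm]
  refine Finset.sum_congr rfl fun i _ => ?_
  rw [map_sum]
  refine Finset.sum_congr rfl fun j _ => ?_
  by_cases h : j = i
  · rw [if_neg (by simp [h]), if_pos h, star_zero, zero_mul, map_zero]
  · rw [if_pos h, if_neg h]
    rfl

/-- The continuous linear map sending a matrix to its `(i,j)` entry. -/
noncomputable def entryCLM (i j : Fin n) : Matrix (Fin n) (Fin n) 𝕜 →L[ℝ] 𝕜 :=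
  LinearMap.toContinuousLinearMap
    { toFun := fun M => M i j
      map_add' := fun _ _ => rfl
      map_smul' := fun _ _ => rfl }

@[simp] private lemma entryCLM_apply (i j : Fin n) (M : Matrix (Fin n) (Fin n) 𝕜) :
    entryCLM i j M = M i j := rfl

/-- The derivative of `x ↦ ‖x‖²` on `𝕜`, as a continuous real-linear map. -/
noncomputable def nsqDeriv (x : 𝕜) : 𝕜 →L[ℝ] ℝ :=
  (2 : ℝ) • (RCLike.reCLM.comp
    ((ContinuousLinearMap.mul 𝕜 𝕜 ((starRingEnd 𝕜) x)).restrictScalars ℝ))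

@[simp] private lemma nsqDeriv_apply (x z : 𝕜) :
    nsqDeriv x z = 2 * RCLike.re ((starRingEnd 𝕜) x * z) := rfl

private lemma hasFDerivAt_nsq (x : 𝕜) :
    HasFDerivAt (fun y : 𝕜 => ‖y‖ ^ 2) (nsqDeriv x) x := by
  have hc : HasFDerivAt (fun y : 𝕜 => (starRingEnd 𝕜) y)
      ((RCLike.conjCLE (K := 𝕜)) : 𝕜 →L[ℝ] 𝕜) x :=
    ((RCLike.conjCLE (K := 𝕜)) : 𝕜 →L[ℝ] 𝕜).hasFDerivAt
  have hid : HasFDerivAt (fun y : 𝕜 => y) (ContinuousLinearMap.id ℝ 𝕜) x := hasFDerivAt_id x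
  have hmul := hid.mul' hc
  have hre := (RCLike.reCLM (K := 𝕜)).hasFDerivAt.comp x hmul
  have hfun : (fun y : 𝕜 => ‖y‖ ^ 2) = fun y : 𝕜 => RCLike.re (y * (starRingEnd 𝕜) y) := by
    funext y
    rw [RCLike.mul_conj, ← RCLike.ofReal_pow, RCLike.ofReal_re]
  rw [hfun]
  refine hre.congr_fderiv ?_
  refine ContinuousLinearMap.ext fun z => ?_
  simp only [nsqDeriv_apply, ContinuousLinearMap.comp_apply, ContinuousLinearMap.add_apply,
    ContinuousLinearMap.smul_apply, ContinuousLinearMap.smulRight_apply,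
    ContinuousLinearMap.id_apply, ContinuousLinearMap.coe_coe, ContinuousLinearEquiv.coe_coe,
    smul_eq_mul, map_add, RCLike.conjCLE_apply, RCLike.reCLM_apply,
    MulOpposite.smul_eq_mul_unop, MulOpposite.unop_op]
  have h1 : x * (starRingEnd 𝕜) z = (starRingEnd 𝕜) ((starRingEnd 𝕜) x * z) := by
    rw [_root_.map_mul, RCLike.conj_conj, mul_comm]
  have h2 : z * (starRingEnd 𝕜) x = (starRingEnd 𝕜) x * z := mul_comm _ _
  rw [h1, h2, RCLike.conj_re]
  ring

/-- for self-adjoint `A₁,…,A_K` and unitary `Q`, with `D_k = Q^*AₖQ`,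
the matrix `S = ∑ₖ [D_k^*, D_k ∘ J]` is skew-adjoint, hence `G = Q·S` lies in the
tangent space `Q·𝕊(n,𝔽)` of the unitary group at `Q`, and `G` is the gradient of
`f_𝒜` at `Q`: `df_𝒜|_Q(Z) = ⟨G, Z⟩_ℝ` for all matrices `Z`. -/
theorem gradient_costF_selfAdjoint_unitary (A : Fin K → Matrix (Fin n) (Fin n) 𝕜)
    (hA : ∀ k, (A k)ᴴ = A k)
    (Q : Matrix (Fin n) (Fin n) 𝕜) (hQ1 : Qᴴ * Q = 1) (hQ2 : Q * Qᴴ = 1)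
    (D : Fin K → Matrix (Fin n) (Fin n) 𝕜) (hD : ∀ k, D k = Qᴴ * A k * Q)
    (S : Matrix (Fin n) (Fin n) 𝕜)
    (hS : S = ∑ k, ((D k)ᴴ * offd (D k) - offd (D k) * (D k)ᴴ)) :
    Sᴴ = -S ∧ ∀ Z : Matrix (Fin n) (Fin n) 𝕜,
      fderiv ℝ (costF A) Q Z = rinner (Q * S) Z := by
  classical
  have hQ2' : ∀ X : Matrix (Fin n) (Fin n) 𝕜, Q * (Qᴴ * X) = X := fun X => by
    rw [← Matrix.mul_assoc, hQ2, Matrix.one_mul]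
  have hDH : ∀ k, (D k)ᴴ = D k := fun k => by
    rw [hD]
    simp [Matrix.conjTranspose_mul, hA, Matrix.mul_assoc]
  have hPH : ∀ k, (offd (D k))ᴴ = offd (D k) := fun k => by
    rw [offd_conjTranspose, hDH]
  have hskew : Sᴴ = -S := by
    rw [hS, Matrix.conjTranspose_sum, ← Finset.sum_neg_distrib]
    refine Finset.sum_congr rfl fun k _ => ?_
    simp only [Matrix.conjTranspose_sub, Matrix.conjTranspose_mul,
      Matrix.conjTranspose_conjTranspose, hPH, hDH, neg_sub]
  refine ⟨hskew, ?_⟩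
  have hRinv : Ring.inverse Q = Qᴴ := by
    rw [← Matrix.nonsing_inv_eq_ringInverse, Matrix.inv_eq_left_inv hQ1]
  have hinv : HasFDerivAt Ring.inverse
      (-(ContinuousLinearMap.mulLeftRight ℝ (Matrix (Fin n) (Fin n) 𝕜) Qᴴ Qᴴ)) Q :=
    hasFDerivAt_ringInverse (⟨Q, Qᴴ, hQ2, hQ1⟩ : (Matrix (Fin n) (Fin n) 𝕜)ˣ)
  have hBk : ∀ k, HasFDerivAt (fun M : Matrix (Fin n) (Fin n) 𝕜 => Ring.inverse M * (A k * M))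
      (Ring.inverse Q • ContinuousLinearMap.mul ℝ (Matrix (Fin n) (Fin n) 𝕜) (A k)
        + MulOpposite.op (A k * Q) •
            (-(ContinuousLinearMap.mulLeftRight ℝ (Matrix (Fin n) (Fin n) 𝕜) Qᴴ Qᴴ))
            ) Q :=
    fun k => hinv.mul' (ContinuousLinearMap.mul ℝ (Matrix (Fin n) (Fin n) 𝕜) (A k)).hasFDerivAt
  have hcost : costF A = fun M : Matrix (Fin n) (Fin n) 𝕜 =>
      (1/2 : ℝ) * ∑ k, ∑ i, ∑ j,
        (if i ≠ j then ‖(Ring.inverse M * (A k * M)) i j‖ ^ 2 else 0) := by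
    funext M
    simp only [costF, Matrix.nonsing_inv_eq_ringInverse, Matrix.mul_assoc, one_div]
  have hterm : ∀ (k : Fin K) (i j : Fin n), HasFDerivAt
      (fun M : Matrix (Fin n) (Fin n) 𝕜 =>
        if i ≠ j then ‖(Ring.inverse M * (A k * M)) i j‖ ^ 2 else 0)
      (if i ≠ j then
        (nsqDeriv ((Ring.inverse Q * (A k * Q)) i j)).comp
          ((entryCLM i j).comp (Ring.inverse Q • ContinuousLinearMap.mul ℝ (Matrix (Fin n) (Fin n) 𝕜) (A k)
            + MulOpposite.op (A k * Q) •
                (-(ContinuousLinearMap.mulLeftRight ℝ (Matrix (Fin n) (Fin n) 𝕜) Qᴴ Qᴴ))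
                ))
       else 0) Q := by
    intro k i j
    by_cases h : i = j
    · simp only [h, ne_eq, not_true_eq_false, if_false]
      exact hasFDerivAt_const _ _
    · simp only [ne_eq, h, not_false_eq_true, if_true]
      exact (hasFDerivAt_nsq _).comp Q ((entryCLM (𝕜 := 𝕜) i j).hasFDerivAt.comp Q (hBk k))
  have hsum : HasFDerivAt (costF A)
      ((1/2 : ℝ) • ∑ k, ∑ i, ∑ j,
        (if i ≠ j then
          (nsqDeriv ((Ring.inverse Q * (A k * Q)) i j)).comp
            ((entryCLM i j).comp (Ring.inverse Q • ContinuousLinearMap.mul ℝ (Matrix (Fin n) (Fin n) 𝕜) (A k)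
              + MulOpposite.op (A k * Q) •
                  (-(ContinuousLinearMap.mulLeftRight ℝ (Matrix (Fin n) (Fin n) 𝕜) Qᴴ Qᴴ))
                  ))
         else 0)) Q := by
    rw [hcost]
    exact HasFDerivAt.const_mul
      (HasFDerivAt.fun_sum fun k _ => HasFDerivAt.fun_sum fun i _ => HasFDerivAt.fun_sum fun j _ =>
        hterm k i j) (1/2 : ℝ)
  intro Z
  refine (DFunLike.congr_fun hsum.fderiv Z).trans ?_
  have hD2 : ∀ k, Ring.inverse Q * (A k * Q) = D k := fun k => by
    rw [hRinv, hD, Matrix.mul_assoc]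
  have hMM : ∀ k, Qᴴ * (A k * Z) + (-(Qᴴ * Z * Qᴴ)) * (A k * Q)
      = D k * (Qᴴ * Z) - (Qᴴ * Z) * D k := by
    intro k
    have e1 : Qᴴ * A k * Q * (Qᴴ * Z) = Qᴴ * (A k * Z) := by
      rw [Matrix.mul_assoc (Qᴴ * A k) Q (Qᴴ * Z), hQ2' Z, Matrix.mul_assoc]
    have e2 : Qᴴ * Z * (Qᴴ * A k * Q) = Qᴴ * Z * Qᴴ * (A k * Q) := by
      simp only [Matrix.mul_assoc]
    rw [hD, e1, e2, neg_mul, ← sub_eq_add_neg]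
  simp only [ContinuousLinearMap.smul_apply, ContinuousLinearMap.sum_apply,
    apply_ite (fun f : Matrix (Fin n) (Fin n) 𝕜 →L[ℝ] ℝ => f Z),
    ContinuousLinearMap.comp_apply, ContinuousLinearMap.zero_apply, entryCLM_apply,
    nsqDeriv_apply, ContinuousLinearMap.add_apply, ContinuousLinearMap.smulRight_apply,
    ContinuousLinearMap.mul_apply', ContinuousLinearMap.neg_apply,
    ContinuousLinearMap.mulLeftRight_apply, smul_eq_mul, hRinv, hD2,
    MulOpposite.smul_eq_mul_unop, MulOpposite.unop_op, DFunLike.ite_apply]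
  simp only [show ∀ (k : Fin K) (i j : Fin n), ((entryCLM i j).comp
      (Qᴴ • ContinuousLinearMap.mul ℝ (Matrix (Fin n) (Fin n) 𝕜) (A k)
        + MulOpposite.op (A k * Q) •
          (-(ContinuousLinearMap.mulLeftRight ℝ (Matrix (Fin n) (Fin n) 𝕜) Qᴴ Qᴴ)))) Z
      = (Qᴴ * (A k * Z) + (-(Qᴴ * Z * Qᴴ)) * (A k * Q)) i j from fun _ _ _ => rfl]
  have hD3 : ∀ k, Qᴴ * (A k * Q) = D k := fun k => by rw [hD, Matrix.mul_assoc]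
  simp only [hMM, hD3]
  have hk : ∀ k : Fin K, ∑ i, ∑ j, (if i ≠ j then
        2 * RCLike.re ((starRingEnd 𝕜) (D k i j) * (D k * (Qᴴ * Z) - Qᴴ * Z * D k) i j) else 0)
      = 2 * RCLike.re (Matrix.trace ((offd (D k))ᴴ * (D k * (Qᴴ * Z) - Qᴴ * Z * D k))) := by
    intro k
    rw [← sum_ite_re]
    simp only [Finset.mul_sum, mul_ite, mul_zero]
  rw [Finset.sum_congr rfl fun k _ => hk k, ← Finset.mul_sum, ← mul_assoc]
  norm_num
  have htr : ∀ k : Fin K, Matrix.trace ((offd (D k))ᴴ * (D k * (Qᴴ * Z) - Qᴴ * Z * D k))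
      = Matrix.trace (-((D k)ᴴ * offd (D k) - offd (D k) * (D k)ᴴ) * (Qᴴ * Z)) := by
    intro k
    rw [hPH k, hDH k, neg_sub, Matrix.sub_mul, Matrix.mul_sub, Matrix.trace_sub,
      Matrix.trace_sub]
    congr 1
    · rw [Matrix.mul_assoc]
    · rw [← Matrix.mul_assoc, Matrix.trace_mul_comm (offd (D k) * (Qᴴ * Z)) (D k),
        ← Matrix.mul_assoc]
  simp only [htr]
  rw [← map_sum, ← Matrix.trace_sum, ← Finset.sum_mul, Finset.sum_neg_distrib, ← hS]
  rw [rinner_eq_trace]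
  have h1 : ((-S) * (Qᴴ * Z))ᴴ = Zᴴ * Q * S := by
    rw [Matrix.conjTranspose_mul, Matrix.conjTranspose_neg, hskew, neg_neg,
      Matrix.conjTranspose_mul, Matrix.conjTranspose_conjTranspose]
  have h2 : Matrix.trace ((Q * S) * Zᴴ) = star (Matrix.trace ((-S) * (Qᴴ * Z))) := by
    rw [← Matrix.trace_conjTranspose, h1, Matrix.mul_assoc, Matrix.trace_mul_comm Q (S * Zᴴ),
      Matrix.mul_assoc S Zᴴ Q, Matrix.trace_mul_comm S (Zᴴ * Q)]
  rw [h2, RCLike.star_def, RCLike.conj_re]
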